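/- There is no acyclic Boolean conjunctive query equivalent, over all databases satisfying the TGD set T_{⊠} = {L(x₃,x₄), S(x₁,x₃), R(x₃,x₂), B(x₁,x₂) → T(x₃,x₄); L(x₃,x₄), S(x₁,x₃), R(x₃,x₂), T(x₃,x₄) → B(x₁,x₂)}, to the Boolean CQ q_{⊠}() ← B(x₁,x₂), R(x₃,x₂), T(x₃,x₄), L(x₁,x₄), S(x₁,x₃). -/

import Mathlib

/-- A relational instance over schema `σ` with domain `α`: a set of facts. -/
abbrev Inst (σ α : Type) := Set (σ × List α)

/-- `h` is a homomorphism from instance `D` to instance `E`. -/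
def IsHom {σ α β : Type} (D : Inst σ α) (E : Inst σ β) (h : α → β) : Prop :=
  ∀ R as, (R, as) ∈ D → (R, as.map h) ∈ E

/-- The active domain of an instance. -/
def activeDom {σ α : Type} (D : Inst σ α) : Set α :=
  {a | ∃ R as, (R, as) ∈ D ∧ a ∈ as}

/-- Variables occurring in a set of atoms (atoms use natural numbers as variables). -/
def varsOf {σ : Type} (S : Set (σ × List ℕ)) : Set ℕ :=
  {x | ∃ R as, (R, as) ∈ S ∧ x ∈ as}

/-- A tuple-generating dependency: body and head are sets of relational atoms. -/
structure TGD (σ : Type) where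
  body : Set (σ × List ℕ)
  head : Set (σ × List ℕ)

/-- Frontier variables: variables shared by body and head. -/
def TGD.frontier {σ : Type} (t : TGD σ) : Set ℕ := varsOf t.body ∩ varsOf t.head

/-- `D` satisfies the TGD `t`. -/
def Satisfies {σ α : Type} (D : Inst σ α) (t : TGD σ) : Prop :=
  ∀ h : ℕ → α, IsHom t.body D h →
    ∃ g : ℕ → α, (∀ x ∈ t.frontier, g x = h x) ∧ IsHom t.head D g

/-- A conjunctive query: a set of atoms and a list of answer variables. -/
structure CQ (σ : Type) where
  atoms : Set (σ × List ℕ)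
  ansVars : List ℕ

/-- The set of answers to a CQ on an instance. -/
def CQ.Ans {σ α : Type} (q : CQ σ) (D : Inst σ α) : Set (List α) :=
  {c | ∃ h : ℕ → α, IsHom q.atoms D h ∧ q.ansVars.map h = c}

/-- `q` is acyclic: its atoms admit a join tree, i.e. a tree whose nodes are
the atoms such that the atoms containing any given variable form a connected
subtree. -/
def AcyclicCQ {σ : Type} (q : CQ σ) : Prop :=
  ∃ G : SimpleGraph q.atoms, G.IsTree ∧
    ∀ (x : ℕ) (a b : q.atoms), x ∈ a.val.2 → x ∈ b.val.2 →
      ∃ p : G.Walk a b, ∀ c ∈ p.support, x ∈ c.val.2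

/-- The schema of the example: five binary relation symbols. -/
inductive S5 : Type where
  | B | R | T | L | S
deriving DecidableEq

/-- The Boolean CQ q() ← B(x₁,x₂), R(x₃,x₂), T(x₃,x₄), L(x₁,x₄), S(x₁,x₃). -/
def qbox : CQ S5 where
  atoms := {(S5.B, [1, 2]), (S5.R, [3, 2]), (S5.T, [3, 4]), (S5.L, [1, 4]), (S5.S, [1, 3])}
  ansVars := []

/-- The TGD L(x₃,x₄), S(x₁,x₃), R(x₃,x₂), B(x₁,x₂) → T(x₃,x₄). -/
def Ttop : TGD S5 where
  body := {(S5.L, [3, 4]), (S5.S, [1, 3]), (S5.R, [3, 2]), (S5.B, [1, 2])}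
  head := {(S5.T, [3, 4])}

/-- The TGD L(x₃,x₄), S(x₁,x₃), R(x₃,x₂), T(x₃,x₄) → B(x₁,x₂). -/
def Tbot : TGD S5 where
  body := {(S5.L, [3, 4]), (S5.S, [1, 3]), (S5.R, [3, 2]), (S5.T, [3, 4])}
  head := {(S5.B, [1, 2])}

/-- Along any walk from a vertex satisfying `P` to one not satisfying `P`,
there is an edge switching from `P` to `¬ P`. -/
lemma walk_switch {V : Type*} {G : SimpleGraph V} {P : V → Prop} :
    ∀ {u v : V} (w : G.Walk u v), P u → ¬ P v →
      ∃ m m', G.Adj m m' ∧ m ∈ w.support ∧ m' ∈ w.support ∧ P m ∧ ¬ P m' := by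
  intro u v w
  induction w with
  | nil => intro h h'; exact absurd h h'
  | @cons u x v h w ih =>
    intro hu hv
    by_cases hx : P x
    · obtain ⟨m, m', hadj, hm, hm', hPm, hPm'⟩ := ih hx hv
      exact ⟨m, m', hadj, by simp [SimpleGraph.Walk.support_cons, hm],
        by simp [SimpleGraph.Walk.support_cons, hm'], hPm, hPm'⟩
    · exact ⟨u, x, h, by simp, by simp [SimpleGraph.Walk.support_cons], hu, hx⟩

/-- There is no acyclic Boolean CQ that is equivalent to `qbox` on all
databases satisfying the two TGDs `Ttop` and `Tbot`. -/
theorem stmt14 :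
    ¬ ∃ q : CQ S5, q.atoms.Finite ∧ AcyclicCQ q ∧ q.ansVars = [] ∧
      ∀ D : Inst S5 ℕ, D.Finite → Satisfies D Ttop → Satisfies D Tbot →
        ((∃ h : ℕ → ℕ, IsHom q.atoms D h) ↔ (∃ h : ℕ → ℕ, IsHom qbox.atoms D h)) := by
  rintro ⟨q, hfin, ⟨G, htree, hconn⟩, -, hequiv⟩
  -- The canonical database of qbox
  have hfin₀ : (qbox.atoms : Inst S5 ℕ).Finite := by
    simp only [qbox]
    exact (Set.finite_singleton _).insert _ |>.insert _ |>.insert _ |>.insert _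
  -- qbox's canonical database satisfies both TGDs vacuously
  have hsat₀top : Satisfies (qbox.atoms : Inst S5 ℕ) Ttop := by
    intro h hb
    exfalso
    have hL := hb S5.L [3, 4] (by simp [Ttop])
    have hS := hb S5.S [1, 3] (by simp [Ttop])
    simp [qbox] at hL hS
    omega
  have hsat₀bot : Satisfies (qbox.atoms : Inst S5 ℕ) Tbot := by
    intro h hb
    exfalso
    have hL := hb S5.L [3, 4] (by simp [Tbot])
    have hS := hb S5.S [1, 3] (by simp [Tbot])
    simp [qbox] at hL hS
    omega
  -- qbox maps into its own canonical database, hence so does q : get f : q → qbox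
  obtain ⟨f, hf⟩ :=
    (hequiv qbox.atoms hfin₀ hsat₀top hsat₀bot).mpr ⟨id, fun R as h => by simpa using h⟩
  -- the canonical database of q satisfies both TGDs (vacuously, via f)
  have hsatTop : Satisfies (q.atoms : Inst S5 ℕ) Ttop := by
    intro h hb
    exfalso
    have hL := hf S5.L [h 3, h 4] (by simpa using hb S5.L [3, 4] (by simp [Ttop]))
    have hS := hf S5.S [h 1, h 3] (by simpa using hb S5.S [1, 3] (by simp [Ttop]))
    simp [qbox] at hL hS
    omega
  have hsatBot : Satisfies (q.atoms : Inst S5 ℕ) Tbot := by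
    intro h hb
    exfalso
    have hL := hf S5.L [h 3, h 4] (by simpa using hb S5.L [3, 4] (by simp [Tbot]))
    have hS := hf S5.S [h 1, h 3] (by simpa using hb S5.S [1, 3] (by simp [Tbot]))
    simp [qbox] at hL hS
    omega
  -- q maps into its own canonical database, hence qbox does: get g : qbox → q
  obtain ⟨g, hg⟩ :=
    (hequiv q.atoms hfin hsatTop hsatBot).mp ⟨id, fun R as h => by simpa using h⟩
  set a := g 1 with ha
  set b := g 2 with hb
  set c := g 3 with hc
  have hB : (S5.B, [a, b]) ∈ q.atoms := by simpa using hg S5.B [1, 2] (by simp [qbox])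
  have hR : (S5.R, [c, b]) ∈ q.atoms := by simpa using hg S5.R [3, 2] (by simp [qbox])
  have hS : (S5.S, [a, c]) ∈ q.atoms := by simpa using hg S5.S [1, 3] (by simp [qbox])
  have hfB := hf S5.B [a, b] hB
  have hfR := hf S5.R [c, b] hR
  simp [qbox] at hfB hfR
  obtain ⟨hfa, hfb⟩ := hfB
  obtain ⟨hfc, -⟩ := hfR
  have hab : a ≠ b := fun e => by rw [e, hfb] at hfa; exact absurd hfa (by norm_num)
  have hac : a ≠ c := fun e => by rw [e, hfc] at hfa; exact absurd hfa (by norm_num)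
  have hbc : b ≠ c := fun e => by rw [e, hfc] at hfb; exact absurd hfb (by norm_num)
  -- no atom of q contains all three of a, b, c
  have no3 : ∀ v : q.atoms, a ∈ v.val.2 → b ∈ v.val.2 → c ∈ v.val.2 → False := by
    rintro ⟨⟨R, l⟩, hv⟩ hva hvb hvc
    have hfl := hf R l hv
    have h1 : (1 : ℕ) ∈ l.map f := hfa ▸ List.mem_map_of_mem (f := f) hva
    have h2 : (2 : ℕ) ∈ l.map f := hfb ▸ List.mem_map_of_mem (f := f) hvb
    have h3 : (3 : ℕ) ∈ l.map f := hfc ▸ List.mem_map_of_mem (f := f) hvc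
    simp [qbox] at hfl
    rcases hfl with ⟨-, e⟩ | ⟨-, e⟩ | ⟨-, e⟩ | ⟨-, e⟩ | ⟨-, e⟩ <;>
      rw [e] at h1 h2 h3 <;> simp at h1 h2 h3
  -- vertices of the join tree
  set vA : q.atoms := ⟨(S5.B, [a, b]), hB⟩ with hvA
  set vA' : q.atoms := ⟨(S5.R, [c, b]), hR⟩ with hvA'
  set vA'' : q.atoms := ⟨(S5.S, [a, c]), hS⟩ with hvA''
  -- connectedness upgraded to paths
  have hpath : ∀ (x : ℕ) (u v : q.atoms), x ∈ u.val.2 → x ∈ v.val.2 →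
      ∃ p : G.Walk u v, p.IsPath ∧ ∀ y ∈ p.support, x ∈ y.val.2 := by
    intro x u v hu hv
    obtain ⟨w, hw⟩ := hconn x u v hu hv
    exact ⟨w.bypass, w.bypass_isPath, fun y hy => hw y (w.support_bypass_subset hy)⟩
  have huniq := htree.existsUnique_path
  -- any path's support is contained in any walk's support between the same endpoints
  have key : ∀ (u v : q.atoms) (p w : G.Walk u v), p.IsPath →
      ∀ y ∈ p.support, y ∈ w.support := by
    intro u v p w hp y hy
    obtain ⟨pp, -, hun⟩ := huniq u v
    have e1 : p = pp := hun p hp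
    have e2 : w.bypass = pp := hun w.bypass w.bypass_isPath
    rw [e1, ← e2] at hy
    exact w.support_bypass_subset hy
  obtain ⟨p, hpP, hpb⟩ := hpath b vA vA' (by simp [hvA]) (by simp [hvA'])
  obtain ⟨qq, hqP, hqa⟩ := hpath a vA'' vA (by simp [hvA'']) (by simp [hvA])
  obtain ⟨r, hrP, hrc⟩ := hpath c vA'' vA' (by simp [hvA'']) (by simp [hvA'])
  have hrsub : ∀ y ∈ r.support, y ∈ qq.support ∨ y ∈ p.support := by
    intro y hy
    have := key vA'' vA' r (qq.append p) hrP y hy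
    rwa [SimpleGraph.Walk.mem_support_append_iff] at this
  -- find the switching edge on r, for P := a ∈ ·
  obtain ⟨m, m', hadj, hm, hm', hPm, hPm'⟩ :=
    walk_switch (P := fun v => a ∈ v.val.2) r (by simp [hvA''])
      (by simp [hvA']; exact ⟨hac, hab⟩)
  have hcm : c ∈ m.val.2 := hrc m hm
  have hcm' : c ∈ m'.val.2 := hrc m' hm'
  have hbm' : b ∈ m'.val.2 := by
    rcases hrsub m' hm' with h | h
    · exact absurd (hqa m' h) hPm'
    · exact hpb m' h
  have hbm : b ∉ m.val.2 := fun h => no3 m hPm h hcm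
  obtain ⟨pa, hpaP, hpaA⟩ := hpath a m vA hPm (by simp [hvA])
  obtain ⟨pb, hpbP, hpbA⟩ := hpath b m' vA hbm' (by simp [hvA])
  by_cases hmm : m ∈ pb.support
  · exact hbm (hpbA m hmm)
  · have hw1 : (SimpleGraph.Walk.cons hadj pb).IsPath :=
      (SimpleGraph.Walk.cons_isPath_iff hadj pb).mpr ⟨hpbP, hmm⟩
    have : m' ∈ pa.support := by
      have := key m vA (SimpleGraph.Walk.cons hadj pb) pa hw1 m'
        (by simp [SimpleGraph.Walk.support_cons])
      exact this
    exact hPm' (hpaA m' this)
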